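/- Let ν be a positive probability density on ℝ, C¹ with A₁ := sup_t |ν'(t)|/ν(t) < ∞, r ≥ 1, V(x) = (1+|x|)^r, and define P_{k,α}f(x) = (−1)^k x^k ∫ f(y) ν^{(k)}(y − αx) dy. Then for every β ∈ [0,1], f with ‖f‖_β := sup |f|/V^β < ∞, every x ∈ ℝ and α, α' ∈ (−a₀, a₀): |(P_{0,α}f)(x) − (P_{0,α'}f)(x)| ≤ |α − α'| A₁ B ‖f‖_β V(x)^{β + 1/r}, where B is a constant with P_α V^β ≤ B V^β for all |α| ≤ a₀. -/

import Mathlib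

open MeasureTheory Set

set_option maxHeartbeats 1000000 in
theorem stmt14 (ν : ℝ → ℝ) (hpos : ∀ t, 0 < ν t) (hdiff : Differentiable ℝ ν)
    (hint : Integrable ν) (hmass : ∫ x, ν x = 1)
    (A₁ : ℝ) (hA₁ : ∀ t, |deriv ν t| ≤ A₁ * ν t)
    (r : ℝ) (hr : 1 ≤ r) (β : ℝ) (hβ : β ∈ Set.Icc (0 : ℝ) 1)
    (a₀ : ℝ) (ha₀ : a₀ ∈ Set.Ioo (0 : ℝ) 1)
    (B : ℝ)
    (hBint : ∀ α ∈ Set.Icc (-a₀) a₀, ∀ x : ℝ,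
      Integrable (fun y => ((1 + |y|) ^ r) ^ β * ν (y - α * x)))
    (hB : ∀ α ∈ Set.Icc (-a₀) a₀, ∀ x : ℝ,
      (∫ y, ((1 + |y|) ^ r) ^ β * ν (y - α * x)) ≤ B * ((1 + |x|) ^ r) ^ β)
    (f : ℝ → ℝ) (hfm : Measurable f) (F : ℝ) (hF : 0 ≤ F)
    (hf : ∀ y, |f y| ≤ F * ((1 + |y|) ^ r) ^ β)
    (α α' : ℝ) (hα : α ∈ Set.Ioo (-a₀) a₀) (hα' : α' ∈ Set.Ioo (-a₀) a₀) (x : ℝ) :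
    |(∫ y, f y * ν (y - α * x)) - ∫ y, f y * ν (y - α' * x)|
      ≤ |α - α'| * A₁ * B * F * ((1 + |x|) ^ r) ^ (β + 1 / r) := by
  have hr0 : 0 < r := lt_of_lt_of_le one_pos hr
  have hνc : Continuous ν := hdiff.continuous
  have hA₁0 : 0 ≤ A₁ := by
    have h := hA₁ 0
    nlinarith [abs_nonneg (deriv ν 0), hpos 0]
  have hV0 : ∀ y : ℝ, 0 < ((1 + |y|) ^ r) ^ β := by
    intro y
    exact Real.rpow_pos_of_pos (Real.rpow_pos_of_pos (by positivity) r) β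
  have hB0 : 0 ≤ B := by
    have h0 : (0:ℝ) ∈ Set.Icc (-a₀) a₀ := by
      constructor <;> linarith [ha₀.1]
    have h1 := hB 0 h0 0
    have h2 : 0 ≤ ∫ y : ℝ, ((1 + |y|) ^ r) ^ β * ν (y - 0 * 0) :=
      integral_nonneg fun y => mul_nonneg (hV0 y).le (hpos _).le
    nlinarith [hV0 0]
  -- the segment
  set S : Set ℝ := Set.uIoc α' α with hSdef
  have hSsub : S ⊆ Set.Icc (-a₀) a₀ := by
    intro s hs
    rcases hs with ⟨h1, h2⟩
    constructor
    · rcases min_cases α' α with ⟨e, _⟩ | ⟨e, _⟩ <;> rw [e] at h1 <;>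
        [linarith [hα'.1]; linarith [hα.1]]
    · rcases max_cases α' α with ⟨e, _⟩ | ⟨e, _⟩ <;> rw [e] at h2 <;>
        [linarith [hα'.2.le]; linarith [hα.2.le]]
  have hSmeas : MeasurableSet S := measurableSet_uIoc
  have hSvol : volume S = ENNReal.ofReal |α - α'| := by
    rw [hSdef, Set.uIoc, Real.volume_Ioc, max_sub_min_eq_abs]
  have hSfin : IsFiniteMeasure (volume.restrict S) := by
    constructor
    rw [Measure.restrict_apply_univ, hSvol]
    exact ENNReal.ofReal_lt_top
  -- Step 1: pointwise bound via FTC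
  have step1 : ∀ y : ℝ, |ν (y - α * x) - ν (y - α' * x)|
      ≤ ∫ s in S, |x| * A₁ * ν (y - s * x) := by
    intro y
    have hderiv : ∀ s ∈ Set.uIcc α' α,
        HasDerivAt (fun s => ν (y - s * x)) (deriv ν (y - s * x) * (-x)) s := by
      intro s _
      have h1 : HasDerivAt (fun s : ℝ => y - s * x) (-x) s := by
        simpa using ((hasDerivAt_id s).mul_const x).const_sub y
      exact ((hdiff (y - s * x)).hasDerivAt).comp s h1
    have hbound_cont : Continuous (fun s : ℝ => A₁ * ν (y - s * x) * |x|) := by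
      continuity
    have hmeas_g : AEStronglyMeasurable (fun s => deriv ν (y - s * x) * (-x))
        (volume.restrict (Set.uIoc α' α)) := by
      exact (((measurable_deriv ν).comp
        (measurable_const.sub (measurable_id.mul measurable_const))).mul
        measurable_const).aestronglyMeasurable
    have hptwise : ∀ s : ℝ, ‖deriv ν (y - s * x) * (-x)‖ ≤ A₁ * ν (y - s * x) * |x| := by
      intro s
      have h1 := hA₁ (y - s * x)
      calc ‖deriv ν (y - s * x) * (-x)‖ = |deriv ν (y - s * x)| * |x| := by
            rw [norm_mul]; simp [Real.norm_eq_abs]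
        _ ≤ A₁ * ν (y - s * x) * |x| := mul_le_mul_of_nonneg_right h1 (abs_nonneg x)
    have hii : IntervalIntegrable (fun s => deriv ν (y - s * x) * (-x)) volume α' α := by
      refine (hbound_cont.intervalIntegrable α' α).mono_fun hmeas_g ?_
      refine Filter.Eventually.of_forall fun s => ?_
      refine (hptwise s).trans_eq ?_
      show A₁ * ν (y - s * x) * |x| = ‖A₁ * ν (y - s * x) * |x|‖
      rw [Real.norm_eq_abs]
      exact (abs_of_nonneg (mul_nonneg (mul_nonneg hA₁0 (hpos _).le) (abs_nonneg x))).symm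
    have hftc := intervalIntegral.integral_eq_sub_of_hasDerivAt hderiv hii
    have habs : |ν (y - α * x) - ν (y - α' * x)|
        ≤ ∫ s in Set.uIoc α' α, ‖deriv ν (y - s * x) * (-x)‖ := by
      rw [← hftc, ← Real.norm_eq_abs]
      exact intervalIntegral.norm_integral_le_integral_norm_uIoc
    refine habs.trans ?_
    refine integral_mono ?_ ?_ ?_
    · rw [intervalIntegrable_iff] at hii
      exact hii.norm
    · have hc2 : Continuous fun s : ℝ => |x| * A₁ * ν (y - s * x) := by continuity
      exact (hc2.integrableOn_uIcc (a := α') (b := α)).mono_set Set.uIoc_subset_uIcc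
    · intro s
      refine (hptwise s).trans_eq (by ring)
  -- integrability of the P_α integrands
  have hPint : ∀ a ∈ Set.Icc (-a₀) a₀, Integrable (fun y => f y * ν (y - a * x)) := by
    intro a ha
    refine Integrable.mono' ((hBint a ha x).const_mul F) ?_ ?_
    · exact (hfm.mul (hνc.measurable.comp
        (measurable_id.sub measurable_const))).aestronglyMeasurable
    · refine Filter.Eventually.of_forall fun y => ?_
      rw [Real.norm_eq_abs, abs_mul, abs_of_pos (hpos _)]
      calc |f y| * ν (y - a * x) ≤ (F * ((1 + |y|) ^ r) ^ β) * ν (y - a * x) :=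
            mul_le_mul_of_nonneg_right (hf y) (hpos _).le
        _ = F * (((1 + |y|) ^ r) ^ β * ν (y - a * x)) := by ring
  have hαI : α ∈ Set.Icc (-a₀) a₀ := ⟨hα.1.le, hα.2.le⟩
  have hα'I : α' ∈ Set.Icc (-a₀) a₀ := ⟨hα'.1.le, hα'.2.le⟩
  -- product function integrability
  set G : ℝ × ℝ → ℝ := fun p => |f p.2| * (|x| * A₁ * ν (p.2 - p.1 * x)) with hG
  have hGnn : ∀ p : ℝ × ℝ, 0 ≤ G p := fun p =>
    mul_nonneg (abs_nonneg _)
      (mul_nonneg (mul_nonneg (abs_nonneg x) hA₁0) (hpos _).le)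
  have hGm : Measurable G :=
    ((hfm.comp measurable_snd).abs).mul
      (measurable_const.mul (hνc.measurable.comp
        (measurable_snd.sub (measurable_fst.mul measurable_const))))
  have hGmeas : AEStronglyMeasurable G ((volume.restrict S).prod volume) :=
    hGm.aestronglyMeasurable
  have hGsect : ∀ s ∈ Set.Icc (-a₀) a₀, Integrable (fun y => G (s, y)) := by
    intro s hs
    refine Integrable.mono' (((hBint s hs x).const_mul F).const_mul (|x| * A₁)) ?_ ?_
    · exact (hGm.comp (measurable_const.prodMk measurable_id)).aestronglyMeasurable
    · refine Filter.Eventually.of_forall fun y => ?_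
      rw [Real.norm_eq_abs, abs_of_nonneg (hGnn (s, y))]
      calc |f y| * (|x| * A₁ * ν (y - s * x))
          ≤ (F * ((1 + |y|) ^ r) ^ β) * (|x| * A₁ * ν (y - s * x)) :=
            mul_le_mul_of_nonneg_right (hf y)
              (mul_nonneg (mul_nonneg (abs_nonneg x) hA₁0) (hpos _).le)
        _ = |x| * A₁ * (F * (((1 + |y|) ^ r) ^ β * ν (y - s * x))) := by ring
  have hGsectBound : ∀ s ∈ Set.Icc (-a₀) a₀,
      (∫ y, G (s, y)) ≤ |x| * A₁ * (F * (B * ((1 + |x|) ^ r) ^ β)) := by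
    intro s hs
    have h1 : (∫ y, G (s, y))
        ≤ ∫ y, |x| * A₁ * (F * (((1 + |y|) ^ r) ^ β * ν (y - s * x))) := by
      refine integral_mono (hGsect s hs) ?_ ?_
      · exact (((hBint s hs x).const_mul F).const_mul (|x| * A₁))
      · intro y
        calc |f y| * (|x| * A₁ * ν (y - s * x))
            ≤ (F * ((1 + |y|) ^ r) ^ β) * (|x| * A₁ * ν (y - s * x)) :=
              mul_le_mul_of_nonneg_right (hf y)
                (mul_nonneg (mul_nonneg (abs_nonneg x) hA₁0) (hpos _).le)
          _ = |x| * A₁ * (F * (((1 + |y|) ^ r) ^ β * ν (y - s * x))) := by ring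
    refine h1.trans ?_
    rw [integral_const_mul, integral_const_mul]
    have h2 := hB s hs x
    have hxA : 0 ≤ |x| * A₁ := mul_nonneg (abs_nonneg x) hA₁0
    nlinarith [mul_nonneg hxA hF]
  have hGint : Integrable G ((volume.restrict S).prod volume) := by
    rw [integrable_prod_iff hGmeas]
    constructor
    · refine (ae_restrict_iff' hSmeas).2 (Filter.Eventually.of_forall fun s hs => ?_)
      exact hGsect s (hSsub hs)
    · refine Integrable.mono'
        (integrable_const (μ := volume.restrict S) (|x| * A₁ * (F * (B * ((1 + |x|) ^ r) ^ β)))) ?_ ?_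
      · refine StronglyMeasurable.aestronglyMeasurable ?_
        exact StronglyMeasurable.integral_prod_right
          (f := fun s y => ‖G (s, y)‖) (hGm.norm.stronglyMeasurable)
      · refine (ae_restrict_iff' hSmeas).2 (Filter.Eventually.of_forall fun s hs => ?_)
        have hs' := hSsub hs
        have h1 : (fun y => ‖G (s, y)‖) = fun y => G (s, y) := by
          funext y
          rw [Real.norm_eq_abs, abs_of_nonneg (hGnn (s, y))]
        rw [Real.norm_eq_abs, h1, abs_of_nonneg (integral_nonneg fun y => hGnn (s, y))]
        exact hGsectBound s hs'
  -- Main chain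
  have key : |(∫ y, f y * ν (y - α * x)) - ∫ y, f y * ν (y - α' * x)|
      ≤ ∫ s in S, ∫ y, G (s, y) := by
    rw [← integral_sub (hPint α hαI) (hPint α' hα'I)]
    have h1 : |∫ y, (f y * ν (y - α * x) - f y * ν (y - α' * x))|
        ≤ ∫ y, |f y * ν (y - α * x) - f y * ν (y - α' * x)| := by
      rw [← Real.norm_eq_abs]
      exact (norm_integral_le_integral_norm _).trans_eq (by simp [Real.norm_eq_abs])
    refine h1.trans ?_
    have h2 : (∫ y, |f y * ν (y - α * x) - f y * ν (y - α' * x)|)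
        ≤ ∫ y, ∫ s in S, G (s, y) := by
      refine integral_mono ((hPint α hαI).sub (hPint α' hα'I)).abs
        hGint.integral_prod_right ?_
      intro y
      show |f y * ν (y - α * x) - f y * ν (y - α' * x)| ≤ ∫ s in S, G (s, y)
      have h3 : |f y * ν (y - α * x) - f y * ν (y - α' * x)|
          = |f y| * |ν (y - α * x) - ν (y - α' * x)| := by
        rw [← abs_mul, mul_sub]
      rw [h3]
      calc |f y| * |ν (y - α * x) - ν (y - α' * x)|
          ≤ |f y| * ∫ s in S, |x| * A₁ * ν (y - s * x) :=
            mul_le_mul_of_nonneg_left (step1 y) (abs_nonneg _)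
        _ = ∫ s in S, |f y| * (|x| * A₁ * ν (y - s * x)) :=
            (integral_const_mul _ _).symm
        _ = ∫ s in S, G (s, y) := rfl
    refine h2.trans ?_
    exact le_of_eq (integral_integral_swap (f := fun s y => G (s, y)) hGint).symm
  refine key.trans ?_
  -- bound the outer integral
  set C : ℝ := |x| * A₁ * (F * (B * ((1 + |x|) ^ r) ^ β)) with hC
  have h4 : (∫ s in S, ∫ y, G (s, y)) ≤ ∫ s in S, C := by
    refine integral_mono_of_nonneg ?_ (integrable_const C) ?_
    · exact Filter.Eventually.of_forall fun s => integral_nonneg fun y => hGnn (s, y)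
    · refine (ae_restrict_iff' hSmeas).2 (Filter.Eventually.of_forall fun s hs => ?_)
      exact hGsectBound s (hSsub hs)
  refine h4.trans ?_
  rw [setIntegral_const, measureReal_def, hSvol, smul_eq_mul, ENNReal.toReal_ofReal (abs_nonneg _)]
  -- final arithmetic
  have hb : (0:ℝ) < 1 + |x| := by positivity
  have hx1 : |x| ≤ ((1 + |x|) ^ r) ^ (1/r : ℝ) := by
    rw [← Real.rpow_mul hb.le, mul_one_div_cancel hr0.ne', Real.rpow_one]
    linarith [abs_nonneg x]
  have hsplit : ((1 + |x|) ^ r) ^ (β + 1/r : ℝ)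
      = ((1 + |x|) ^ r) ^ β * ((1 + |x|) ^ r) ^ (1/r : ℝ) :=
    Real.rpow_add (Real.rpow_pos_of_pos hb r) _ _
  rw [hC, hsplit]
  have h5 : |x| * ((1 + |x|) ^ r) ^ β ≤ ((1 + |x|) ^ r) ^ β * ((1 + |x|) ^ r) ^ (1/r : ℝ) := by
    rw [mul_comm]
    exact mul_le_mul_of_nonneg_left hx1 (hV0 x).le
  nlinarith [mul_nonneg (mul_nonneg (abs_nonneg (α - α')) hA₁0) (mul_nonneg hB0 hF),
    abs_nonneg (α - α'), mul_nonneg hA₁0 (mul_nonneg hF hB0), hV0 x,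
    Real.rpow_pos_of_pos (Real.rpow_pos_of_pos hb r) (1/r)]
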